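/- Let p : J → ℝ be a function on an open interval J ⊆ ℝ and let t : J → ℝ be a twice differentiable solution of the ordinary differential equation t''/t' − t' = p(x) on J with t'(x) ≠ 0 for all x ∈ J. Let c₀, c₁ be real constants with c₁ ≠ 0 such that w(x) = c₀ + c₁·e^{−t(x)} > 0 for all x ∈ J, and set t₂(x) = −log w(x). Then t₂ is twice differentiable, t₂'(x) ≠ 0, and t₂''(x)/t₂'(x) − t₂'(x) = p(x) for all x ∈ J. (Thus a single particular solution t yields, via e^{−t₂} = c₀ + c₁ e^{−t} with two arbitrary constants c₀, c₁, the general solution of the equation t_{xx}/t_x − t_x = p(x).) -/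

import Mathlib

/-- a single particular solution `t` of `t_{xx}/t_x - t_x = p(x)` yields its
general solution via `e^{-t₂} = c₀ + c₁ e^{-t}` with two arbitrary constants. -/
theorem stmt_19 (J : Set ℝ) (hJ : IsOpen J) (hJc : J.OrdConnected)
    (p t : ℝ → ℝ) (c₀ c₁ : ℝ) (hc₁ : c₁ ≠ 0)
    (ht : ∀ x ∈ J, DifferentiableAt ℝ t x)
    (ht' : ∀ x ∈ J, DifferentiableAt ℝ (deriv t) x)
    (htne : ∀ x ∈ J, deriv t x ≠ 0)
    (heq : ∀ x ∈ J, deriv (deriv t) x / deriv t x - deriv t x = p x)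
    (hw : ∀ x ∈ J, 0 < c₀ + c₁ * Real.exp (-(t x)))
    (t₂ : ℝ → ℝ)
    (ht₂ : ∀ x, t₂ x = -Real.log (c₀ + c₁ * Real.exp (-(t x)))) :
    (∀ x ∈ J, DifferentiableAt ℝ t₂ x) ∧
    (∀ x ∈ J, DifferentiableAt ℝ (deriv t₂) x) ∧
    (∀ x ∈ J, deriv t₂ x ≠ 0) ∧
    (∀ x ∈ J, deriv (deriv t₂) x / deriv t₂ x - deriv t₂ x = p x) := by
  set w : ℝ → ℝ := fun x => c₀ + c₁ * Real.exp (-(t x)) with hwdef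
  set g : ℝ → ℝ := fun x => c₁ * Real.exp (-(t x)) * deriv t x / w x with hgdef
  have hwne : ∀ x ∈ J, w x ≠ 0 := fun x hx => (hw x hx).ne'
  -- derivative of w
  have hwd : ∀ x ∈ J, HasDerivAt w (c₁ * (Real.exp (-(t x)) * -(deriv t x))) x := by
    intro x hx
    have h1 : HasDerivAt (fun y => -(t y)) (-(deriv t x)) x := ((ht x hx).hasDerivAt).neg
    have h2 := h1.exp
    exact (h2.const_mul c₁).const_add c₀
  -- derivative of t₂
  have hA : ∀ x ∈ J, HasDerivAt t₂ (g x) x := by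
    intro x hx
    have h3 : HasDerivAt (fun y => -Real.log (w y)) (-(c₁ * (Real.exp (-(t x)) * -(deriv t x)) / w x)) x :=
      ((hwd x hx).log (hwne x hx)).neg
    have : t₂ = fun y => -Real.log (w y) := funext fun y => ht₂ y
    rw [this]
    convert h3 using 1
    simp only [hgdef]
    field_simp
  have hderiv : ∀ x ∈ J, deriv t₂ x = g x := fun x hx => (hA x hx).deriv
  have hgne : ∀ x ∈ J, g x ≠ 0 := by
    intro x hx
    simp only [hgdef]
    exact div_ne_zero (mul_ne_zero (mul_ne_zero hc₁ (Real.exp_ne_zero _)) (htne x hx)) (hwne x hx)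
  -- derivative of g
  have hgd : ∀ x ∈ J, HasDerivAt g
      (((c₁ * (Real.exp (-(t x)) * -(deriv t x)) * deriv t x
        + c₁ * Real.exp (-(t x)) * deriv (deriv t) x) * w x
        - c₁ * Real.exp (-(t x)) * deriv t x * (c₁ * (Real.exp (-(t x)) * -(deriv t x))))
        / (w x) ^ 2) x := by
    intro x hx
    have h1 : HasDerivAt (fun y => -(t y)) (-(deriv t x)) x := ((ht x hx).hasDerivAt).neg
    have h2 := (h1.exp.const_mul c₁)
    have h3 := h2.mul (ht' x hx).hasDerivAt
    exact h3.div (hwd x hx) (hwne x hx)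
  have hEq : ∀ x ∈ J, deriv t₂ =ᶠ[nhds x] g := fun x hx =>
    Filter.eventuallyEq_of_mem (hJ.mem_nhds hx) (fun y hy => hderiv y hy)
  refine ⟨fun x hx => (hA x hx).differentiableAt, ?_, ?_, ?_⟩
  · intro x hx
    exact ((hgd x hx).differentiableAt).congr_of_eventuallyEq (hEq x hx)
  · intro x hx
    rw [hderiv x hx]; exact hgne x hx
  · intro x hx
    have hd2 : deriv (deriv t₂) x = deriv g x := (hEq x hx).deriv_eq
    rw [hd2, (hgd x hx).deriv, hderiv x hx]
    rw [← heq x hx]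
    simp only [hgdef]
    have hW := hwne x hx
    have hT := htne x hx
    have hE := Real.exp_ne_zero (-(t x))
    field_simp
    ring
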